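/- Let g, h : ℕ → ℕ be positive sequences with g(N) + h(N) → ∞ and (g(N)+h(N))/N → 0 as N → ∞, set κ(N) = (g(N)+h(N))/N and λ(N) = (1 - g(N)/N)(1 - h(N)/N), and let m : ℕ → ℕ be a positive integer sequence. Then the sum S_m = Σ_{k=1}^{m(N)} (2k-1)·λ(N)^(k-1) satisfies S_m ~ (2/κ(N)²)·(1 - e^(-m(N)κ(N))·(m(N)κ(N) + 1)) as N → ∞, i.e., the ratio of the two sides tends to 1. -/

import Mathlib

open Filter intervalIntegral

noncomputable def phi (x : ℝ) : ℝ := 1 - Real.exp (-x) * (x + 1)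

lemma hasDerivAt_F (t : ℝ) : HasDerivAt (fun t : ℝ => -(Real.exp (-t) * (t + 1)))
    (t * Real.exp (-t)) t := by
  have h1 : HasDerivAt (fun t : ℝ => Real.exp (-t)) (-Real.exp (-t)) t := by
    simpa using (hasDerivAt_neg t).exp
  have h2 : HasDerivAt (fun t : ℝ => t + 1) 1 t := (hasDerivAt_id t).add_const 1
  have : HasDerivAt (fun t : ℝ => -(Real.exp (-t) * (t + 1)))
      (-(-Real.exp (-t) * (t + 1) + Real.exp (-t) * 1)) t := (h1.mul h2).neg
  convert this using 1
  ring

lemma cont_te : Continuous (fun t : ℝ => t * Real.exp (-t)) := by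
  continuity

lemma phi_eq_integral (x : ℝ) : phi x = ∫ t in (0:ℝ)..x, t * Real.exp (-t) := by
  have := integral_eq_sub_of_hasDerivAt (f := fun t : ℝ => -(Real.exp (-t) * (t + 1)))
    (f' := fun t : ℝ => t * Real.exp (-t)) (a := 0) (b := x)
    (fun t _ => hasDerivAt_F t) (cont_te.intervalIntegrable 0 x)
  rw [this]
  simp [phi]
  ring

lemma phi_pos {x : ℝ} (hx : 0 < x) : 0 < phi x := by
  have h := Real.add_one_lt_exp (x := x) (by positivity)
  have hex : 0 < Real.exp x := Real.exp_pos x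
  have : Real.exp (-x) * (x + 1) < 1 := by
    rw [Real.exp_neg]
    rw [inv_mul_lt_one₀ hex]  -- guess name
    linarith
  simp only [phi]; linarith

lemma phi_mono {x y : ℝ} (hx : 0 ≤ x) (hxy : x ≤ y) : phi x ≤ phi y := by
  rw [phi_eq_integral, phi_eq_integral]
  rw [← intervalIntegral.integral_add_adjacent_intervals
    (cont_te.intervalIntegrable 0 x) (cont_te.intervalIntegrable x y)]
  have : 0 ≤ ∫ t in x..y, t * Real.exp (-t) := by
    apply intervalIntegral.integral_nonneg hxy
    intro u hu
    have : 0 ≤ u := le_trans hx hu.1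
    positivity
  linarith

lemma phi_scale {c x : ℝ} (hc : 1 ≤ c) (hx : 0 ≤ x) : phi (c * x) ≤ c ^ 2 * phi x := by
  have hc0 : (0:ℝ) < c := lt_of_lt_of_le one_pos hc
  rw [phi_eq_integral, phi_eq_integral]
  have hsub : (∫ t in (0:ℝ)..x, (c * t) * Real.exp (-(c * t)))
      = c⁻¹ • ∫ t in (c*0:ℝ)..(c*x), t * Real.exp (-t) :=
    integral_comp_mul_left (fun t => t * Real.exp (-t)) hc0.ne'
  have hmono : (∫ t in (0:ℝ)..x, c * t * Real.exp (-(c * t)))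
      ≤ ∫ t in (0:ℝ)..x, c * (t * Real.exp (-t)) := by
    apply integral_mono_on hx
    · exact (Continuous.intervalIntegrable (by continuity) 0 x)
    · exact (Continuous.intervalIntegrable (by continuity) 0 x)
    · intro t ht
      have h1 : Real.exp (-(c*t)) ≤ Real.exp (-t) := by
        apply Real.exp_le_exp.2
        nlinarith [ht.1]
      have h2 := mul_le_mul_of_nonneg_left h1 (mul_nonneg hc0.le ht.1)
      nlinarith [h2]
  rw [mul_zero] at hsub
  have hcmul : (∫ t in (0:ℝ)..x, c * (t * Real.exp (-t))) = c * ∫ t in (0:ℝ)..x, t * Real.exp (-t) :=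
    intervalIntegral.integral_const_mul _ _
  have := hsub ▸ hmono
  rw [hcmul] at this
  rw [smul_eq_mul] at this
  calc ∫ t in (0:ℝ)..(c*x), t * Real.exp (-t)
      = c * (c⁻¹ * ∫ t in (0:ℝ)..(c*x), t * Real.exp (-t)) := by field_simp
    _ ≤ c * (c * ∫ t in (0:ℝ)..x, t * Real.exp (-t)) := by
        apply mul_le_mul_of_nonneg_left this hc0.le
    _ = c ^ 2 * ∫ t in (0:ℝ)..x, t * Real.exp (-t) := by ring



lemma J_eq {ν : ℝ} (hν : 0 < ν) (M : ℝ) :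
    (∫ t in (0:ℝ)..M, 2 * t * Real.exp (-(ν * t))) = 2 / ν ^ 2 * phi (ν * M) := by
  have key : (∫ t in (0:ℝ)..M, 2 * t * Real.exp (-(ν * t)))
      = ∫ t in (0:ℝ)..M, (fun s => 2 / ν * (s * Real.exp (-s))) (ν * t) := by
    apply intervalIntegral.integral_congr
    intro t _
    field_simp
  have h2 := integral_comp_mul_left (a := (0:ℝ)) (b := M)
    (fun s => 2 / ν * (s * Real.exp (-s))) hν.ne'
  rw [key, h2]
  rw [intervalIntegral.integral_const_mul]
  rw [phi_eq_integral, mul_zero, smul_eq_mul]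
  field_simp [hν.ne']

lemma piece_upper {μ : ℝ} (hμ : 0 ≤ μ) (k : ℕ) :
    (∫ t in (k:ℝ)..(k+1:ℝ), 2 * t * Real.exp (-(μ * t)))
      ≤ (2 * k + 1) * Real.exp (-(μ * k)) := by
  have h : (∫ t in (k:ℝ)..(k+1:ℝ), 2 * t * Real.exp (-(μ * t)))
      ≤ ∫ t in (k:ℝ)..(k+1:ℝ), Real.exp (-(μ * k)) * (2 * t) := by
    apply integral_mono_on (by linarith : (k:ℝ) ≤ k+1)
    · exact Continuous.intervalIntegrable (by continuity) _ _
    · exact Continuous.intervalIntegrable (by continuity) _ _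
    · intro t ht
      have h1 : Real.exp (-(μ * t)) ≤ Real.exp (-(μ * k)) := by
        apply Real.exp_le_exp.2
        nlinarith [ht.1]
      have ht0 : (0:ℝ) ≤ t := le_trans (Nat.cast_nonneg k) ht.1
      nlinarith [mul_le_mul_of_nonneg_left h1 (by linarith : (0:ℝ) ≤ 2*t)]
  calc (∫ t in (k:ℝ)..(k+1:ℝ), 2 * t * Real.exp (-(μ * t)))
      ≤ ∫ t in (k:ℝ)..(k+1:ℝ), Real.exp (-(μ * k)) * (2 * t) := h
    _ = Real.exp (-(μ * k)) * ∫ t in (k:ℝ)..(k+1:ℝ), 2 * t := by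
        rw [intervalIntegral.integral_const_mul]
    _ = (2 * k + 1) * Real.exp (-(μ * k)) := by
        rw [intervalIntegral.integral_const_mul, integral_id]
        ring

lemma piece_lower {μ : ℝ} (hμ : 0 ≤ μ) (k : ℕ) :
    Real.exp (-μ) * ((2 * k + 1) * Real.exp (-(μ * k)))
      ≤ ∫ t in (k:ℝ)..(k+1:ℝ), 2 * t * Real.exp (-(μ * t)) := by
  have h : (∫ t in (k:ℝ)..(k+1:ℝ), Real.exp (-(μ * (k+1))) * (2 * t))
      ≤ ∫ t in (k:ℝ)..(k+1:ℝ), 2 * t * Real.exp (-(μ * t)) := by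
    apply integral_mono_on (by linarith : (k:ℝ) ≤ k+1)
    · exact Continuous.intervalIntegrable (by continuity) _ _
    · exact Continuous.intervalIntegrable (by continuity) _ _
    · intro t ht
      have h1 : Real.exp (-(μ * (k+1))) ≤ Real.exp (-(μ * t)) := by
        apply Real.exp_le_exp.2
        nlinarith [ht.2]
      have ht0 : (0:ℝ) ≤ t := le_trans (Nat.cast_nonneg k) ht.1
      nlinarith [mul_le_mul_of_nonneg_left h1 (by linarith : (0:ℝ) ≤ 2*t)]
  calc Real.exp (-μ) * ((2 * k + 1) * Real.exp (-(μ * k)))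
      = Real.exp (-(μ * (k+1))) * (2 * k + 1) := by
        rw [show -(μ*(k+1)) = -μ + -(μ*k) by ring, Real.exp_add]; ring
    _ = ∫ t in (k:ℝ)..(k+1:ℝ), Real.exp (-(μ * (k+1))) * (2 * t) := by
        rw [intervalIntegral.integral_const_mul, intervalIntegral.integral_const_mul, integral_id]
        push_cast
        ring
    _ ≤ _ := h

lemma J_split {μ : ℝ} (m : ℕ) :
    (∫ t in (0:ℝ)..(m:ℝ), 2 * t * Real.exp (-(μ * t)))
      = ∑ k ∈ Finset.range m, ∫ t in (k:ℝ)..(k+1:ℝ), 2 * t * Real.exp (-(μ * t)) := by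
  have h := intervalIntegral.sum_integral_adjacent_intervals
    (f := fun t : ℝ => 2 * t * Real.exp (-(μ * t))) (μ := MeasureTheory.volume)
    (a := fun k : ℕ => (k:ℝ)) (n := m)
    (fun k _ => Continuous.intervalIntegrable (by continuity) _ _)
  simp only [Nat.cast_zero] at h
  rw [← h]
  apply Finset.sum_congr rfl
  intro k _
  norm_num

lemma sum_bounds {μ : ℝ} (hμ : 0 ≤ μ) (m : ℕ) :
    (∫ t in (0:ℝ)..(m:ℝ), 2 * t * Real.exp (-(μ * t)))
      ≤ (∑ k ∈ Finset.range m, (2 * (k:ℝ) + 1) * Real.exp (-(μ * k)))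
    ∧ (∑ k ∈ Finset.range m, (2 * (k:ℝ) + 1) * Real.exp (-(μ * k)))
      ≤ Real.exp μ * ∫ t in (0:ℝ)..(m:ℝ), 2 * t * Real.exp (-(μ * t)) := by
  constructor
  · rw [J_split]
    apply Finset.sum_le_sum
    intro k _
    simpa using piece_upper hμ k
  · rw [J_split, Finset.mul_sum]
    have h := fun k : ℕ => piece_lower hμ k
    have : ∑ k ∈ Finset.range m, (2 * (k:ℝ) + 1) * Real.exp (-(μ * k))
        = ∑ k ∈ Finset.range m, Real.exp μ * (Real.exp (-μ) * ((2 * (k:ℝ) + 1) * Real.exp (-(μ * k)))) := by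
      apply Finset.sum_congr rfl
      intro k _
      rw [← mul_assoc, ← Real.exp_add]
      simp
    rw [this]
    apply Finset.sum_le_sum
    intro k _
    exact mul_le_mul_of_nonneg_left (h k) (Real.exp_pos μ).le



lemma core_bounds {a b κ μ : ℝ} (ha : 0 < a) (hb : 0 < b) (hab : a + b < 1/2)
    (hκ : κ = a + b) (hμ : μ = -Real.log ((1-a)*(1-b))) :
    0 < κ ∧ 0 < (1-a)*(1-b) ∧ (1-κ)^2 ≤ (1-a)*(1-b) ∧ (1-a)*(1-b) ≤ 1
    ∧ κ * (1 - κ/4) ≤ μ ∧ μ ≤ κ / ((1-a)*(1-b)) ∧ 0 < μ := by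
  have ha1 : a < 1/2 := by linarith
  have hb1 : b < 1/2 := by linarith
  have hκpos : 0 < κ := by rw [hκ]; linarith
  have hlampos : 0 < (1-a)*(1-b) := by nlinarith
  have hlamle1 : (1-a)*(1-b) ≤ 1 := by nlinarith
  have hlamlb : (1-κ)^2 ≤ (1-a)*(1-b) := by rw [hκ]; nlinarith
  have h1mlam_ub : 1 - (1-a)*(1-b) ≤ κ := by rw [hκ]; nlinarith
  have h1mlam_lb : κ * (1 - κ/4) ≤ 1 - (1-a)*(1-b) := by rw [hκ]; nlinarith [sq_nonneg (a-b)]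
  have hμlb : κ * (1 - κ/4) ≤ μ := by
    have := Real.log_le_sub_one_of_pos hlampos
    rw [hμ]; linarith
  have hμpos : 0 < μ := by
    have h4 : 0 < 1 - κ/4 := by rw [hκ]; linarith
    calc (0:ℝ) < κ * (1 - κ/4) := mul_pos hκpos h4
      _ ≤ μ := hμlb
  have hμub : μ ≤ κ / ((1-a)*(1-b)) := by
    have hinv := Real.log_le_sub_one_of_pos (inv_pos.2 hlampos)
    rw [Real.log_inv] at hinv
    have h2 : μ ≤ ((1-a)*(1-b))⁻¹ - 1 := by rw [hμ]; linarith
    have h3 : ((1-a)*(1-b))⁻¹ - 1 = (1 - (1-a)*(1-b)) / ((1-a)*(1-b)) := by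
      rw [inv_eq_one_div, div_sub_one hlampos.ne']
    rw [h3] at h2
    calc μ ≤ (1 - (1-a)*(1-b)) / ((1-a)*(1-b)) := h2
      _ ≤ κ / ((1-a)*(1-b)) := by gcongr
  exact ⟨hκpos, hlampos, hlamlb, hlamle1, hμlb, hμub, hμpos⟩

set_option maxHeartbeats 2000000 in
lemma core {a b κ μ : ℝ} (m : ℕ) (hm : 0 < m) (ha : 0 < a) (hb : 0 < b)
    (hab : a + b < 1/2) (hκ : κ = a + b) (hμ : μ = -Real.log ((1-a)*(1-b))) :
    min 1 ((κ/μ)^2) ≤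
      (∑ k ∈ Finset.range m, (2 * ((k : ℝ) + 1) - 1) * ((1-a)*(1-b)) ^ k) /
        ((2 / κ ^ 2) * (1 - Real.exp (-(m : ℝ) * κ) * ((m : ℝ) * κ + 1)))
    ∧ (∑ k ∈ Finset.range m, (2 * ((k : ℝ) + 1) - 1) * ((1-a)*(1-b)) ^ k) /
        ((2 / κ ^ 2) * (1 - Real.exp (-(m : ℝ) * κ) * ((m : ℝ) * κ + 1)))
      ≤ Real.exp μ * max 1 ((κ/μ)^2) := by
  obtain ⟨hκpos, hlampos, hlamlb, hlamle1, hμlb, hμub, hμpos⟩ :=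
    core_bounds ha hb hab hκ hμ
  set lam := (1-a)*(1-b) with hlam
  set S := ∑ k ∈ Finset.range m, (2 * ((k : ℝ) + 1) - 1) * lam ^ k with hS
  set D := (2 / κ ^ 2) * (1 - Real.exp (-(m : ℝ) * κ) * ((m : ℝ) * κ + 1)) with hD
  have hmpos : (0:ℝ) < m := Nat.cast_pos.2 hm
  have hDphi : D = 2 / κ ^ 2 * phi (κ * m) := by
    rw [hD]
    simp only [phi]
    ring_nf
  have hDpos : 0 < D := by
    rw [hDphi]
    exact mul_pos (by positivity) (phi_pos (by positivity))
  have hSeq : S = ∑ k ∈ Finset.range m, (2 * (k:ℝ) + 1) * Real.exp (-(μ * k)) := by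
    rw [hS]
    apply Finset.sum_congr rfl
    intro k _
    have hpow : lam ^ k = Real.exp (-(μ * k)) := by
      rw [← Real.exp_log hlampos, ← Real.exp_nat_mul]
      congr 1
      rw [hμ]; ring
    rw [hpow]; ring
  obtain ⟨hJS, hSJ⟩ := sum_bounds hμpos.le m
  rw [J_eq hμpos] at hJS hSJ
  rw [← hSeq] at hJS hSJ
  -- hJS : 2 / μ ^ 2 * phi (μ * m) ≤ S
  -- hSJ : S ≤ exp μ * (2 / μ ^ 2 * phi (μ * m))
  have key1 : min 1 ((κ/μ)^2) * D ≤ S := by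
    rcases le_total κ μ with hcase | hcase
    · have hr1 : (κ/μ)^2 ≤ 1 := by
        have : κ/μ ≤ 1 := (div_le_one hμpos).2 hcase
        have h0 : 0 ≤ κ/μ := by positivity
        nlinarith
      rw [min_eq_right hr1]
      have heq : (κ/μ)^2 * D = 2 / μ ^ 2 * phi (κ * m) := by
        rw [hDphi]
        field_simp
      rw [heq]
      refine le_trans ?_ hJS
      have := phi_mono (x := κ * m) (y := μ * m) (by positivity)
        (mul_le_mul_of_nonneg_right hcase hmpos.le)
      gcongr
    · have hr1 : 1 ≤ (κ/μ)^2 := by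
        have : 1 ≤ κ/μ := (one_le_div hμpos).2 hcase
        nlinarith
      rw [min_eq_left hr1]
      rw [one_mul, hDphi]
      refine le_trans ?_ hJS
      have hscale := phi_scale (c := κ/μ) (x := μ * m)
        ((one_le_div hμpos).2 hcase) (by positivity)
      have heq2 : κ/μ * (μ * m) = κ * m := by field_simp
      rw [heq2] at hscale
      have h3 : 2 / κ ^ 2 * phi (κ * m) ≤ 2 / κ ^ 2 * ((κ/μ)^2 * phi (μ * m)) := by
        gcongr
      refine h3.trans (le_of_eq ?_)
      field_simp
  have key2 : S ≤ (Real.exp μ * max 1 ((κ/μ)^2)) * D := by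
    rcases le_total κ μ with hcase | hcase
    · rw [max_eq_left]
      · refine hSJ.trans ?_
        rw [mul_one, hDphi]
        have hscale := phi_scale (c := μ/κ) (x := κ * m)
          ((one_le_div hκpos).2 hcase) (by positivity)
        have heq2 : μ/κ * (κ * m) = μ * m := by field_simp
        rw [heq2] at hscale
        have h3 : 2 / μ ^ 2 * phi (μ * m) ≤ 2 / μ ^ 2 * ((μ/κ)^2 * phi (κ * m)) := by
          gcongr
        have h4 : 2 / μ ^ 2 * ((μ/κ)^2 * phi (κ * m)) = 2 / κ ^ 2 * phi (κ * m) := by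
          field_simp
        rw [h4] at h3
        exact mul_le_mul_of_nonneg_left h3 (Real.exp_pos μ).le
      · have : κ/μ ≤ 1 := (div_le_one hμpos).2 hcase
        have h0 : 0 ≤ κ/μ := by positivity
        nlinarith
    · rw [max_eq_right]
      · refine hSJ.trans ?_
        have heq : Real.exp μ * (κ/μ)^2 * D = Real.exp μ * (2 / μ ^ 2 * phi (κ * m)) := by
          rw [hDphi]
          field_simp
        rw [heq]
        have := phi_mono (x := μ * m) (y := κ * m) (by positivity)
          (mul_le_mul_of_nonneg_right hcase hmpos.le)
        gcongr
      · have : 1 ≤ κ/μ := (one_le_div hμpos).2 hcase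
        nlinarith
  constructor
  · rw [le_div_iff₀ hDpos]; exact key1
  · rw [div_le_iff₀ hDpos]; exact key2


/-- Lemma: asymptotics of the arithmetico-geometric sum `S_m = Σ_{k=1}^{m}(2k-1)λ^{k-1}`
with `λ(N) = (1 - g/N)(1 - h/N)` and `κ(N) = (g+h)/N`:
`S_m ~ (2/κ²)(1 - e^{-mκ}(mκ+1))` as `N → ∞`. -/
theorem arithmetico_geometric_asymptotics (g h m : ℕ → ℕ)
    (hg : ∀ N, 0 < g N) (hh : ∀ N, 0 < h N) (hm : ∀ N, 0 < m N)
    (h1 : Tendsto (fun N : ℕ => (g N + h N : ℝ)) atTop atTop)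
    (h2 : Tendsto (fun N : ℕ => (g N + h N : ℝ) / N) atTop (nhds 0)) :
    Tendsto
      (fun N : ℕ =>
        (∑ k ∈ Finset.range (m N),
            (2 * ((k : ℝ) + 1) - 1) *
              ((1 - (g N : ℝ) / N) * (1 - (h N : ℝ) / N)) ^ k) /
          ((2 / ((g N + h N : ℝ) / N) ^ 2) *
            (1 - Real.exp (-(m N : ℝ) * ((g N + h N : ℝ) / N)) *
              ((m N : ℝ) * ((g N + h N : ℝ) / N) + 1))))
      atTop (nhds 1) := by
  set κ : ℕ → ℝ := fun N => (g N + h N : ℝ) / N with hκdef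
  set lam : ℕ → ℝ := fun N => (1 - (g N : ℝ) / N) * (1 - (h N : ℝ) / N) with hlamdef
  set μ : ℕ → ℝ := fun N => -Real.log (lam N) with hμdef
  have hev : ∀ᶠ N in atTop, 0 < N ∧ κ N < 1/2 := by
    filter_upwards [eventually_gt_atTop 0,
      h2.eventually_lt_const (by norm_num : (0:ℝ) < 1/2)] with N h1' h2'
    exact ⟨h1', h2'⟩
  -- basic instantiation facts
  have hinst : ∀ N : ℕ, 0 < N → κ N < 1/2 →
      (0 < (g N : ℝ)/N ∧ 0 < (h N : ℝ)/N ∧ (g N : ℝ)/N + (h N : ℝ)/N < 1/2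
        ∧ κ N = (g N : ℝ)/N + (h N : ℝ)/N ∧ lam N = (1 - (g N : ℝ)/N)*(1 - (h N : ℝ)/N)
        ∧ μ N = -Real.log (lam N)) := by
    intro N hN hκN
    have hNpos : (0:ℝ) < N := Nat.cast_pos.2 hN
    have hκeq : κ N = (g N : ℝ)/N + (h N : ℝ)/N := by
      rw [hκdef]; push_cast; rw [add_div]
    refine ⟨div_pos (Nat.cast_pos.2 (hg N)) hNpos, div_pos (Nat.cast_pos.2 (hh N)) hNpos,
      ?_, hκeq, rfl, rfl⟩
    rw [← hκeq]; exact hκN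
  have hbnds : ∀ᶠ N in atTop,
      0 < κ N ∧ 0 < lam N ∧ (1 - κ N)^2 ≤ lam N ∧ lam N ≤ 1
      ∧ κ N * (1 - κ N/4) ≤ μ N ∧ μ N ≤ κ N / lam N ∧ 0 < μ N := by
    filter_upwards [hev] with N ⟨hN, hκN⟩
    obtain ⟨ha, hb, hab, hκeq, hlameq, hμeq⟩ := hinst N hN hκN
    have := core_bounds (κ := κ N) (μ := μ N) ha hb hab hκeq (by rw [hμeq, hlameq])
    rw [← hlameq] at this
    exact this
  -- limits
  have hlam1 : Tendsto lam atTop (nhds 1) := by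
    have hlow : Tendsto (fun N => (1 - κ N)^2) atTop (nhds 1) := by
      have : Tendsto (fun N => 1 - κ N) atTop (nhds 1) := by
        simpa using tendsto_const_nhds.sub h2
      simpa using this.pow 2
    apply tendsto_of_tendsto_of_tendsto_of_le_of_le' hlow tendsto_const_nhds
    · filter_upwards [hbnds] with N hN; exact hN.2.2.1
    · filter_upwards [hbnds] with N hN; exact hN.2.2.2.1
  have hμ0 : Tendsto μ atTop (nhds 0) := by
    have hub : Tendsto (fun N => κ N / lam N) atTop (nhds 0) := by
      have := h2.div hlam1 one_ne_zero; rw [zero_div] at this; exact this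
    apply tendsto_of_tendsto_of_tendsto_of_le_of_le' tendsto_const_nhds hub
    · filter_upwards [hbnds] with N hN; exact hN.2.2.2.2.2.2.le
    · filter_upwards [hbnds] with N hN; exact hN.2.2.2.2.2.1
  have hc1 : Tendsto (fun N => κ N / μ N) atTop (nhds 1) := by
    have hub : Tendsto (fun N => 1 / (1 - κ N / 4)) atTop (nhds 1) := by
      have hd : Tendsto (fun N => 1 - κ N / 4) atTop (nhds 1) := by
        simpa using tendsto_const_nhds.sub (h2.div_const 4)
      simpa [one_div] using hd.inv₀ one_ne_zero
    apply tendsto_of_tendsto_of_tendsto_of_le_of_le' hlam1 hub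
    · filter_upwards [hbnds, hev] with N hN hev'
      obtain ⟨hκpos, hlampos, _, _, hμlb, hμub, hμpos⟩ := hN
      rw [le_div_iff₀ hμpos]
      calc lam N * μ N ≤ lam N * (κ N / lam N) :=
            mul_le_mul_of_nonneg_left hμub hlampos.le
        _ = κ N := by field_simp
    · filter_upwards [hbnds, hev] with N hN hev'
      obtain ⟨hκpos, hlampos, _, _, hμlb, hμub, hμpos⟩ := hN
      have h4 : 0 < 1 - κ N / 4 := by
        have := hev'.2; linarith
      rw [div_le_div_iff₀ hμpos h4]
      linarith [hμlb]
  have hr1 : Tendsto (fun N => (κ N / μ N)^2) atTop (nhds 1) := by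
    simpa using hc1.pow 2
  have hL : Tendsto (fun N => min 1 ((κ N / μ N)^2)) atTop (nhds 1) := by
    simpa using (tendsto_const_nhds (x := (1:ℝ))).min hr1
  have hU : Tendsto (fun N => Real.exp (μ N) * max 1 ((κ N / μ N)^2)) atTop (nhds 1) := by
    have he : Tendsto (fun N => Real.exp (μ N)) atTop (nhds 1) := by
      simpa [Function.comp_def] using (Real.continuous_exp.tendsto 0).comp hμ0
    simpa using he.mul ((tendsto_const_nhds (x := (1:ℝ))).max hr1)
  apply tendsto_of_tendsto_of_tendsto_of_le_of_le' hL hU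
  · filter_upwards [hev] with N ⟨hN, hκN⟩
    obtain ⟨ha, hb, hab, hκeq, hlameq, hμeq⟩ := hinst N hN hκN
    have := (core (κ := κ N) (μ := μ N) (m N) (hm N) ha hb hab hκeq (by rw [hμeq, hlameq])).1
    exact this
  · filter_upwards [hev] with N ⟨hN, hκN⟩
    obtain ⟨ha, hb, hab, hκeq, hlameq, hμeq⟩ := hinst N hN hκN
    have := (core (κ := κ N) (μ := μ N) (m N) (hm N) ha hb hab hκeq (by rw [hμeq, hlameq])).2
    exact this
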